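/- Fix any z ∈ 𝒜 and define φ : 𝒜 → ℝ by φ(a) = ∫₀¹ Σ_{j=1}^N (∂u_j/∂a_j)(z + r(a − z)) · (a_j − z_j) dr, and let α = (a_δ²/2) · max over players i and action profiles a ∈ 𝒜 of Σ_{j=1}^N |(∂²u_i/∂a_i∂a_j)(a) − (∂²u_j/∂a_j∂a_i)(a)|. Then φ is differentiable and for every player i and every a ∈ 𝒜, |(∂φ/∂a_i)(a) − (∂u_i/∂a_i)(a)| ≤ α/a_δ. -/

import Mathlib

open Function

noncomputable def pd {N : ℕ} (j : Fin N) (f : (Fin N → ℝ) → ℝ) (a : Fin N → ℝ) : ℝ :=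
  deriv (fun t => f (Function.update a j t)) (a j)

lemma pd_eq_fderiv {N : ℕ} (j : Fin N) {f : (Fin N → ℝ) → ℝ} {a : Fin N → ℝ}
    (hf : DifferentiableAt ℝ f a) :
    pd j f a = fderiv ℝ f a (Pi.single j 1) := by
  have h := HasFDerivAt.comp_hasDerivAt (a j)
    (by rw [Function.update_eq_self]; exact hf.hasFDerivAt) (hasDerivAt_update a j (a j))
  exact h.deriv

lemma contDiff_pd {N : ℕ} (j : Fin N) {f : (Fin N → ℝ) → ℝ} {n : ℕ}
    (hf : ContDiff ℝ (n + 1 : ℕ) f) : ContDiff ℝ (n : ℕ) (pd j f) := by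
  have hd : Differentiable ℝ f := hf.differentiable (by simp)
  have : pd j f = fun a => fderiv ℝ f a (Pi.single j 1) :=
    funext fun a => pd_eq_fderiv j (hd a)
  rw [this]
  exact (hf.fderiv_right (by exact_mod_cast le_rfl)).clm_apply contDiff_const

lemma fderiv_apply_eq_sum {N : ℕ} {f : (Fin N → ℝ) → ℝ} {c : Fin N → ℝ}
    (hf : DifferentiableAt ℝ f c) (v : Fin N → ℝ) :
    fderiv ℝ f c v = ∑ j, v j * pd j f c := by
  have hv : v = ∑ j, v j • (Pi.single j (1 : ℝ) : Fin N → ℝ) := by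
    ext k; simp [Pi.single_apply, Finset.sum_ite_eq']
  conv_lhs => rw [hv]
  rw [map_sum]
  refine Finset.sum_congr rfl fun j _ => ?_
  rw [pd_eq_fderiv j hf, map_smul, smul_eq_mul]

set_option maxHeartbeats 2000000 in
open MeasureTheory intervalIntegral in
/-- Fix `z ∈ 𝒜` and define `φ(a) = ∫₀¹ Σ_j (∂u_j/∂a_j)(z + r(a − z)) · (a_j − z_j) dr`, and let
`α = (a_δ²/2) · max_{i, a ∈ 𝒜} Σ_j |(∂²u_i/∂a_i∂a_j)(a) − (∂²u_j/∂a_j∂a_i)(a)|`.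
Then `φ` is differentiable and for every player `i` and every `a ∈ 𝒜`,
`|(∂φ/∂a_i)(a) − (∂u_i/∂a_i)(a)| ≤ α/a_δ`. -/
theorem alpha_potential_gradient_relation
    {N : ℕ} (hN : 0 < N)
    (lo hi : Fin N → ℝ) (hlohi : ∀ i, lo i ≤ hi i)
    (u : Fin N → (Fin N → ℝ) → ℝ) (hu : ∀ i, ContDiff ℝ 2 (u i))
    (A : Set (Fin N → ℝ))
    (hA : A = Set.univ.pi fun i => Set.Icc (lo i) (hi i))
    (aδ : ℝ)
    (haδ : aδ = sSup {d : ℝ | ∃ i : Fin N, ∃ x ∈ Set.Icc (lo i) (hi i),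
      ∃ y ∈ Set.Icc (lo i) (hi i), d = |x - y|})
    (z : Fin N → ℝ) (hz : z ∈ A)
    (φ : (Fin N → ℝ) → ℝ)
    (hφ : ∀ a, φ a =
      ∫ r in (0:ℝ)..1, ∑ j, pd j (u j) (fun k => z k + r * (a k - z k)) * (a j - z j))
    (α : ℝ)
    (hα : α = aδ ^ 2 / 2 *
      sSup {x : ℝ | ∃ i : Fin N, ∃ a ∈ A,
        x = ∑ j, |pd j (pd i (u i)) a - pd i (pd j (u j)) a|}) :
    Differentiable ℝ φ ∧
    ∀ i : Fin N, ∀ a ∈ A, |pd i φ a - pd i (u i) a| ≤ α / aδ := by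
  classical
  have hNe : Nonempty (Fin N) := ⟨⟨0, hN⟩⟩
  -- the first-order partials
  set g : Fin N → (Fin N → ℝ) → ℝ := fun j => pd j (u j) with hg_def
  have hg : ∀ j, ContDiff ℝ 1 (g j) := fun j =>
    contDiff_pd j (n := 1) (by exact_mod_cast hu j)
  have hgd : ∀ j, Differentiable ℝ (g j) := fun j => (hg j).differentiable one_ne_zero
  have hgc : ∀ j, Continuous (g j) := fun j => (hg j).continuous
  have hpdg : ∀ i j : Fin N, Continuous (pd i (g j)) := fun i j =>
    (contDiff_pd i (n := 0) (by exact_mod_cast hg j)).continuous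
  have hfderivg : ∀ j, Continuous (fderiv ℝ (g j)) := fun j =>
    (hg j).continuous_fderiv one_ne_zero
  -- the segment map
  set L : (Fin N → ℝ) → ℝ → (Fin N → ℝ) := fun x r k => z k + r * (x k - z k) with hL_def
  have hLcont : Continuous fun p : (Fin N → ℝ) × ℝ => L p.1 p.2 :=
    continuous_pi fun k => continuous_const.add (continuous_snd.mul
      (((continuous_apply k).comp continuous_fst).sub continuous_const))
  have hLa : ∀ x, Continuous fun r => L x r := fun _ => hLcont.curry_right
  -- the integrand and its derivative in the parameter
  set F : (Fin N → ℝ) → ℝ → ℝ := fun x r => ∑ j, g j (L x r) * (x j - z j) with hF_def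
  set F' : (Fin N → ℝ) → ℝ → ((Fin N → ℝ) →L[ℝ] ℝ) := fun x r =>
    ∑ j, ((g j (L x r)) • (ContinuousLinearMap.proj j : (Fin N → ℝ) →L[ℝ] ℝ)
      + (x j - z j) • ((fderiv ℝ (g j) (L x r)).comp
          (r • ContinuousLinearMap.id ℝ (Fin N → ℝ)))) with hF'_def
  have hφF : φ = fun x => ∫ r in (0:ℝ)..1, F x r := by
    funext x; rw [hφ x]
  have hL1 : ∀ (r : ℝ) (x : Fin N → ℝ),
      HasFDerivAt (fun y => L y r) (r • ContinuousLinearMap.id ℝ (Fin N → ℝ)) x := by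
    intro r x
    have he : (fun y : Fin N → ℝ => L y r) = fun y => z + r • (y - z) := by
      funext y; funext k; simp [hL_def, smul_eq_mul]
    rw [he]
    exact (((hasFDerivAt_id x).sub_const z).const_smul r).const_add z
  have hterm : ∀ (r : ℝ) (x : Fin N → ℝ) (j : Fin N),
      HasFDerivAt (fun y => g j (L y r) * (y j - z j))
      ((g j (L x r)) • (ContinuousLinearMap.proj j : (Fin N → ℝ) →L[ℝ] ℝ)
        + (x j - z j) • ((fderiv ℝ (g j) (L x r)).comp
            (r • ContinuousLinearMap.id ℝ (Fin N → ℝ)))) x := by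
    intro r x j
    have h1 : HasFDerivAt (fun y => g j (L y r))
        ((fderiv ℝ (g j) (L x r)).comp (r • ContinuousLinearMap.id ℝ (Fin N → ℝ))) x :=
      by have := (hgd j (L x r)).hasFDerivAt.comp x (hL1 r x); exact this
    have h2 : HasFDerivAt (fun y : Fin N → ℝ => y j - z j)
        (ContinuousLinearMap.proj j : (Fin N → ℝ) →L[ℝ] ℝ) x := by
      simpa using ((ContinuousLinearMap.proj j :
        (Fin N → ℝ) →L[ℝ] ℝ).hasFDerivAt (x := x)).sub_const (z j)
    exact h1.mul h2
  have hFderiv : ∀ (r : ℝ) (x : Fin N → ℝ), HasFDerivAt (fun y => F y r) (F' x r) x := by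
    intro r x
    simp only [hF_def, hF'_def]
    exact HasFDerivAt.fun_sum (fun j _ => hterm r x j)
  have hFcont : Continuous fun p : (Fin N → ℝ) × ℝ => F p.1 p.2 := by
    simp only [hF_def]
    apply continuous_finset_sum
    intro j _
    exact ((hgc j).comp hLcont).mul
      (((continuous_apply j).comp continuous_fst).sub continuous_const)
  have hF'cont : Continuous fun p : (Fin N → ℝ) × ℝ => F' p.1 p.2 := by
    simp only [hF'_def]
    apply continuous_finset_sum
    intro j _
    refine Continuous.add ?_ ?_
    · exact ((hgc j).comp hLcont).smul continuous_const
    · refine Continuous.smul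
        (((continuous_apply j).comp continuous_fst).sub continuous_const) ?_
      exact ((hfderivg j).comp hLcont).clm_comp (continuous_snd.smul continuous_const)
  have hFx : ∀ x, Continuous fun r => F x r := fun _ => hFcont.curry_right
  have hF'x : ∀ x, Continuous fun r => F' x r := fun _ => hF'cont.curry_right
  -- differentiability of φ
  have key : ∀ x₀ : Fin N → ℝ, HasFDerivAt φ (∫ r in (0:ℝ)..1, F' x₀ r) x₀ := by
    intro x₀
    obtain ⟨C, hC⟩ := ((isCompact_closedBall x₀ 1).prod isCompact_Icc).exists_bound_of_continuousOn
      (s := Metric.closedBall x₀ 1 ×ˢ Set.Icc (0:ℝ) 1)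
      (hF'cont.continuousOn)
    rw [hφF]
    refine intervalIntegral.hasFDerivAt_integral_of_dominated_of_fderiv_le
      (𝕜 := ℝ) (μ := volume) (F := F) (F' := F') (x₀ := x₀) (bound := fun _ => C) (Metric.ball_mem_nhds x₀ one_pos)
      (Filter.Eventually.of_forall fun x => (hFx x).aestronglyMeasurable)
      ((hFx x₀).intervalIntegrable _ _)
      (hF'x x₀).aestronglyMeasurable
      (MeasureTheory.ae_of_all _ fun t ht x hx => ?_)
      intervalIntegrable_const
      (MeasureTheory.ae_of_all _ fun t ht x hx => hFderiv t x)
    refine hC (x, t) ⟨Metric.ball_subset_closedBall hx, ?_⟩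
    rw [Set.uIoc_of_le (by norm_num : (0:ℝ) ≤ 1)] at ht
    exact ⟨le_of_lt ht.1, ht.2⟩
  have hdiff : Differentiable ℝ φ := fun x => (key x).differentiableAt
  refine ⟨hdiff, ?_⟩
  -- second part
  obtain ⟨M, hM_def⟩ : ∃ M : ℝ, M = sSup {x : ℝ | ∃ i : Fin N, ∃ a ∈ A,
      x = ∑ j, |pd j (pd i (u i)) a - pd i (pd j (u j)) a|} := ⟨_, rfl⟩
  have hαM : α = aδ ^ 2 / 2 * M := by rw [hα, hM_def]
  rw [hA] at hz
  have hAcp : IsCompact A := by rw [hA]; exact isCompact_univ_pi fun i => isCompact_Icc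
  have hloA : lo ∈ A := by rw [hA]; intro i _; exact ⟨le_rfl, hlohi i⟩
  have hcontMi : ∀ i : Fin N,
      Continuous fun b => ∑ j, |pd j (pd i (u i)) b - pd i (pd j (u j)) b| := by
    intro i
    apply continuous_finset_sum
    intro j _
    have h1 : Continuous (pd j (pd i (u i))) :=
      (contDiff_pd j (n := 0)
        (by exact_mod_cast contDiff_pd i (n := 1) (by exact_mod_cast hu i))).continuous
    have h2 : Continuous (pd i (pd j (u j))) := hpdg i j
    exact (h1.sub h2).abs
  have hbddM : BddAbove {x : ℝ | ∃ i : Fin N, ∃ a ∈ A,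
      x = ∑ j, |pd j (pd i (u i)) a - pd i (pd j (u j)) a|} := by
    choose C hC using fun i : Fin N =>
      hAcp.exists_bound_of_continuousOn (hcontMi i).continuousOn
    refine ⟨Finset.univ.sup' Finset.univ_nonempty C, ?_⟩
    rintro x ⟨i, b, hb, rfl⟩
    exact le_trans (le_trans (le_abs_self _) (by simpa using hC i b hb))
      (Finset.le_sup' C (Finset.mem_univ i))
  have hM0 : 0 ≤ M := by
    have h1 : (∑ j, |pd j (pd ⟨0,hN⟩ (u ⟨0,hN⟩)) lo - pd ⟨0,hN⟩ (pd j (u j)) lo|) ≤ M := by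
      rw [hM_def]; exact le_csSup hbddM ⟨⟨0, hN⟩, lo, hloA, rfl⟩
    exact le_trans (Finset.sum_nonneg fun j _ => abs_nonneg _) h1
  have hbddδ : BddAbove {d : ℝ | ∃ i : Fin N, ∃ x ∈ Set.Icc (lo i) (hi i),
      ∃ y ∈ Set.Icc (lo i) (hi i), d = |x - y|} := by
    refine ⟨Finset.univ.sup' Finset.univ_nonempty (fun i => hi i - lo i), ?_⟩
    rintro d ⟨i, x, hx, y, hy, rfl⟩
    refine le_trans ?_ (Finset.le_sup' _ (Finset.mem_univ i))
    rw [abs_sub_le_iff]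
    constructor <;> [skip; skip] <;> linarith [hx.1, hx.2, hy.1, hy.2]
  have haδ0 : 0 ≤ aδ := by
    rw [haδ]
    exact le_csSup hbddδ ⟨⟨0, hN⟩, lo ⟨0, hN⟩, ⟨le_rfl, hlohi _⟩, lo ⟨0, hN⟩,
      ⟨le_rfl, hlohi _⟩, by simp⟩
  have hδmem : ∀ b ∈ A, ∀ j : Fin N, |b j - z j| ≤ aδ := by
    intro b hb j
    rw [hA] at hb
    rw [haδ]
    exact le_csSup hbddδ ⟨j, b j, hb j (Set.mem_univ j), z j, hz j (Set.mem_univ j), rfl⟩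
  have hLmem : ∀ b ∈ A, ∀ r ∈ Set.Icc (0:ℝ) 1, L b r ∈ A := by
    intro b hb r hr
    rw [hA] at hb ⊢
    intro k _
    have h1 := hb k (Set.mem_univ k)
    have h2 := hz k (Set.mem_univ k)
    simp only [hL_def]
    constructor
    · nlinarith [h1.1, h1.2, h2.1, h2.2, hr.1, hr.2]
    · nlinarith [h1.1, h1.2, h2.1, h2.2, hr.1, hr.2]
  intro i a ha
  have hInt1 : IntervalIntegrable (fun r => F' a r) volume 0 1 :=
    (hF'x a).intervalIntegrable _ _
  have hpdφ : pd i φ a = ∫ r in (0:ℝ)..1, F' a r (Pi.single i 1) := by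
    rw [pd_eq_fderiv i (key a).differentiableAt, (key a).fderiv]
    exact ContinuousLinearMap.intervalIntegral_apply hInt1 _
  have happ : ∀ r : ℝ, F' a r (Pi.single i 1)
      = (∑ j, (a j - z j) * (r * pd i (g j) (L a r))) + g i (L a r) := by
    intro r
    rw [hF'_def]
    simp only [ContinuousLinearMap.sum_apply, ContinuousLinearMap.add_apply,
      ContinuousLinearMap.coe_smul', Pi.smul_apply, ContinuousLinearMap.proj_apply,
      ContinuousLinearMap.comp_apply, ContinuousLinearMap.id_apply, smul_eq_mul,
      ContinuousLinearMap.map_smul]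
    rw [Finset.sum_add_distrib, add_comm]
    congr 1
    · refine Finset.sum_congr rfl fun j _ => ?_
      rw [pd_eq_fderiv i (hgd j (L a r))]
    · rw [Finset.sum_eq_single i (fun j _ hj => by simp [Pi.single_apply, hj])
        (fun h => absurd (Finset.mem_univ i) h)]
      simp
  have hcE1 : Continuous fun r : ℝ =>
      (∑ j, (a j - z j) * (r * pd i (g j) (L a r))) + g i (L a r) :=
    (continuous_finset_sum _ fun j _ => continuous_const.mul
      (continuous_id.mul ((hpdg i j).comp (hLa a)))).add ((hgc i).comp (hLa a))
  have hcE2 : Continuous fun r : ℝ =>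
      g i (L a r) + r * ∑ j, (a j - z j) * pd j (g i) (L a r) :=
    ((hgc i).comp (hLa a)).add (continuous_id.mul (continuous_finset_sum _ fun j _ =>
      continuous_const.mul ((hpdg j i).comp (hLa a))))
  have hpdφ2 : pd i φ a = ∫ r in (0:ℝ)..1,
      ((∑ j, (a j - z j) * (r * pd i (g j) (L a r))) + g i (L a r)) :=
    hpdφ.trans (intervalIntegral.integral_congr fun r _ => happ r)
  have hFTC : (∫ r in (0:ℝ)..1,
      (g i (L a r) + r * ∑ j, (a j - z j) * pd j (g i) (L a r))) = g i a := by
    have hderiv : ∀ r ∈ Set.uIcc (0:ℝ) 1, HasDerivAt (fun s => s * g i (L a s))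
        (g i (L a r) + r * ∑ j, (a j - z j) * pd j (g i) (L a r)) r := by
      intro r _
      have hLr : HasDerivAt (fun s : ℝ => L a s) (a - z) r := by
        have he : (fun s : ℝ => L a s) = fun s => z + s • (a - z) := by
          funext s; funext k; simp [hL_def, smul_eq_mul]
        rw [he]
        simpa using ((hasDerivAt_id r).smul_const (a - z)).const_add z
      have h2 : HasDerivAt (fun s => g i (L a s)) (fderiv ℝ (g i) (L a r) (a - z)) r :=
        (hgd i (L a r)).hasFDerivAt.comp_hasDerivAt r hLr
      have h3 : HasDerivAt (fun s => s * g i (L a s))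
          (1 * g i (L a r) + r * fderiv ℝ (g i) (L a r) (a - z)) r :=
        (hasDerivAt_id r).mul h2
      convert h3 using 1
      rw [fderiv_apply_eq_sum (hgd i (L a r)) (a - z)]
      simp [Pi.sub_apply]
    rw [intervalIntegral.integral_eq_sub_of_hasDerivAt hderiv
      (hcE2.intervalIntegrable _ _)]
    have hL1a : L a 1 = a := by funext k; simp [hL_def]
    simp [hL1a]
  have hsub : pd i φ a - g i a = ∫ r in (0:ℝ)..1,
      r * ∑ j, (a j - z j) * (pd i (g j) (L a r) - pd j (g i) (L a r)) := by
    rw [hpdφ2, ← hFTC, ← intervalIntegral.integral_sub (hcE1.intervalIntegrable _ _)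
      (hcE2.intervalIntegrable _ _)]
    refine intervalIntegral.integral_congr fun r _ => ?_
    have e1 : ∀ S T G : ℝ, S + G - (G + T) = S - T := fun S T G => by ring
    rw [e1, Finset.mul_sum, Finset.mul_sum, ← Finset.sum_sub_distrib]
    exact Finset.sum_congr rfl fun j _ => by ring
  have hptbd : ∀ r ∈ Set.uIoc (0:ℝ) 1,
      ‖r * ∑ j, (a j - z j) * (pd i (g j) (L a r) - pd j (g i) (L a r))‖ ≤ r * (aδ * M) := by
    intro r hr
    rw [Set.uIoc_of_le (by norm_num : (0:ℝ) ≤ 1)] at hr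
    have hr0 : (0:ℝ) ≤ r := le_of_lt hr.1
    have hmem : L a r ∈ A := hLmem a ha r ⟨hr0, hr.2⟩
    have h1 : ∑ j, |pd i (g j) (L a r) - pd j (g i) (L a r)| ≤ M := by
      have h2 : ∑ j, |pd j (pd i (u i)) (L a r) - pd i (pd j (u j)) (L a r)| ≤ M := by
        rw [hM_def]; exact le_csSup hbddM ⟨i, L a r, hmem, rfl⟩
      calc ∑ j, |pd i (g j) (L a r) - pd j (g i) (L a r)|
          = ∑ j, |pd j (pd i (u i)) (L a r) - pd i (pd j (u j)) (L a r)| :=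
            Finset.sum_congr rfl fun j _ => by simp only [hg_def]; rw [abs_sub_comm]
        _ ≤ M := h2
    rw [Real.norm_eq_abs, abs_mul, abs_of_nonneg hr0]
    refine mul_le_mul_of_nonneg_left ?_ hr0
    calc |∑ j, (a j - z j) * (pd i (g j) (L a r) - pd j (g i) (L a r))|
        ≤ ∑ j, |(a j - z j) * (pd i (g j) (L a r) - pd j (g i) (L a r))| :=
          Finset.abs_sum_le_sum_abs _ _
      _ ≤ ∑ j, aδ * |pd i (g j) (L a r) - pd j (g i) (L a r)| :=
          Finset.sum_le_sum fun j _ => by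
            rw [abs_mul]
            exact mul_le_mul_of_nonneg_right (hδmem a ha j) (abs_nonneg _)
      _ = aδ * ∑ j, |pd i (g j) (L a r) - pd j (g i) (L a r)| := by rw [Finset.mul_sum]
      _ ≤ aδ * M := mul_le_mul_of_nonneg_left h1 haδ0
  have hgia : g i a = pd i (u i) a := by simp only [hg_def]
  have hbnd : |pd i φ a - pd i (u i) a| ≤ aδ * M / 2 := by
    rw [← hgia, hsub, ← Real.norm_eq_abs]
    have hb2 : (∫ r in (0:ℝ)..1, r * (aδ * M)) = aδ * M / 2 := by
      rw [intervalIntegral.integral_mul_const, integral_id]; ring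
    refine le_trans (intervalIntegral.norm_integral_le_of_norm_le
      (g := fun r => r * (aδ * M)) (by norm_num : (0:ℝ) ≤ 1)
      (MeasureTheory.ae_of_all _ fun r hr =>
        hptbd r (by rwa [Set.uIoc_of_le (by norm_num : (0:ℝ) ≤ 1)]))
      ((continuous_id.mul continuous_const).intervalIntegrable _ _)) ?_
    rw [hb2]
  rcases eq_or_lt_of_le haδ0 with h0 | h0
  · have hz0 : α / aδ = 0 := by rw [hαM, ← h0]; norm_num
    rw [hz0]
    simpa [show aδ = 0 from h0.symm] using hbnd
  · have he : α / aδ = aδ * M / 2 := by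
      rw [hαM]; field_simp
    rw [he]
    exact hbnd
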